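/- Summation estimates over the dual torus (Lemma 4.3): Let \(n\geq 0\) be an integer and \(c\geq 1\). Then there exists a constant \(c'\) (depending on \(c\), \(n\) and \(d\)) such that, with \(\eta=\max(\tfrac14(d+n-1)^2,\,d+n+6)+2\), for all integers \(L\geq 3\), \(N\geq 1\) and all \(k=1,\dots,N+1\): (a) \(L^{-dN}\sum_{p\in\widehat{\mathbb{T}}_N\setminus\{0\}}M_{k-1,c,L}(p)\widetilde M_{k-1,c,L}(p)|p|^{n-2}\leq c'L^\eta L^{-(k-1)(d+n-2)}\); (b) \(L^{-dN}\sum_{p\in\widehat{\mathbb{T}}_N\setminus\{0\}}\widetilde M_{k-1,c,L}(p)^2|p|^{n-2}\leq c\,c'L^{\eta+8}L^{-(k-1)(d+n-2)}\); (c) \(L^{-dN}\sum_{p\in\widehat{\mathbb{T}}_N\setminus\{0\}}M_{N,c,L}(p)^2|p|^{n-2}\leq c'L^\eta L^{-N(d+n-2)}\). -/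

import Mathlib

namespace FRD

/-- The symmetric integer representative of `z : ZMod n` (for odd `n`):
the unique `k ∈ (-n/2, n/2]` with `k ≡ z [ZMOD n]`. -/
def intRep (n : ℕ) (z : ZMod n) : ℤ :=
  if 2 * z.val ≤ n - 1 then (z.val : ℤ) else (z.val : ℤ) - (n : ℤ)

/-- The Euclidean norm `|p|` of the dual torus point `p` indexed by `z ∈ (ZMod n)^d`,
`p_i = 2π·intRep(z_i)/n`. -/
noncomputable def pNorm {d : ℕ} (n : ℕ) (p : Fin d → ZMod n) : ℝ :=
  Real.sqrt (∑ i, (2 * Real.pi * (intRep n (p i) : ℝ) / n) ^ 2)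

/-- Index of the annulus `A_j` containing a point of the dual torus with `|p| = r`:
`annIdx L r = j ≥ 1` iff `π L^{-j} ≤ r < π L^{-j+1}`, and `annIdx L r = 0` iff `r ≥ π`. -/
noncomputable def annIdx (L : ℕ) (r : ℝ) : ℕ :=
  sSup {j : ℕ | r < Real.pi * (L : ℝ) ^ (1 - (j : ℤ))}

/-- The step function `M_{k,c,L}` as a function of the annulus index `j`. -/
noncomputable def Mstep (c : ℝ) (L : ℕ) (k j : ℕ) : ℝ :=
  if k ≤ j then 1 else c ^ (k - j) * ((L : ℝ) ^ ((k - j) * (k - j + 1) / 2))⁻¹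

/-- The step function `M̃_{k,c,L}` as a function of the annulus index `j`. -/
noncomputable def MstepT (c : ℝ) (L : ℕ) (k j : ℕ) : ℝ :=
  if k ≤ j then c * (L : ℝ) ^ (8 : ℕ) * (L : ℝ) ^ (4 * ((k : ℤ) - (j : ℤ)))
  else c ^ (k - j) * ((L : ℝ) ^ ((k - j) * (k - j + 1) / 2))⁻¹

/-- The exponent `η(n,d) = max(¼(d+n-1)², d+n+6) + 2`. -/
noncomputable def ηconst (d n : ℕ) : ℝ :=
  max (((d : ℝ) + (n : ℝ) - 1) ^ 2 / 4) ((d : ℝ) + (n : ℝ) + 6) + 2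

open Real Finset in
section
variable {M : ℕ}

lemma intRep_cast [NeZero M] (z : ZMod M) : ((intRep M z : ℤ) : ZMod M) = z := by
  unfold intRep
  split <;> push_cast <;> simp [ZMod.natCast_val, ZMod.cast_id]

lemma intRep_injective [NeZero M] : Function.Injective (intRep M) := by
  intro a b h
  have := intRep_cast (M := M) a
  rw [h, intRep_cast] at this
  exact this.symm

lemma intRep_eq_zero_iff [NeZero M] (z : ZMod M) : intRep M z = 0 ↔ z = 0 := by
  constructor
  · intro h
    have := intRep_cast (M := M) z
    rw [h] at this; simpa using this.symm
  · intro h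
    subst h
    unfold intRep
    simp [ZMod.val_zero]

lemma intRep_bound (hodd : Odd M) [NeZero M] (z : ZMod M) :
    2 * |intRep M z| ≤ (M : ℤ) - 1 := by
  have hM : 0 < M := Nat.pos_of_ne_zero (NeZero.ne M)
  have hval : z.val < M := ZMod.val_lt z
  unfold intRep
  rcases hodd with ⟨m, hm⟩
  split
  next h =>
    rw [abs_of_nonneg (by positivity)]
    push_cast; omega
  next h =>
    push_neg at h
    rw [abs_of_nonpos (by push_cast; omega)]
    push_cast; omega
end

open Real Finset in
section
variable {d M : ℕ}

lemma pNorm_nonneg (p : Fin d → ZMod M) : 0 ≤ pNorm M p := Real.sqrt_nonneg _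

lemma pNorm_coord [NeZero M] (p : Fin d → ZMod M) (i : Fin d) :
    |2 * Real.pi * (intRep M (p i) : ℝ) / M| ≤ pNorm M p := by
  have h1 : (2 * Real.pi * (intRep M (p i) : ℝ) / M) ^ 2 ≤
      ∑ i', (2 * Real.pi * (intRep M (p i') : ℝ) / M) ^ 2 :=
    Finset.single_le_sum (f := fun i' => (2 * Real.pi * (intRep M (p i') : ℝ) / M) ^ 2)
      (fun _ _ => sq_nonneg _) (Finset.mem_univ i)
  calc |2 * Real.pi * (intRep M (p i) : ℝ) / M|
      = Real.sqrt ((2 * Real.pi * (intRep M (p i) : ℝ) / M) ^ 2) := (Real.sqrt_sq_eq_abs _).symm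
    _ ≤ pNorm M p := Real.sqrt_le_sqrt h1

lemma pNorm_lower [NeZero M] {p : Fin d → ZMod M} (hp : p ≠ 0) :
    2 * Real.pi / M ≤ pNorm M p := by
  have hM : (0:ℝ) < M := Nat.cast_pos.mpr (Nat.pos_of_ne_zero (NeZero.ne M))
  obtain ⟨i, hi⟩ : ∃ i, p i ≠ 0 := Function.ne_iff.mp hp
  have h1 : (1:ℤ) ≤ |intRep M (p i)| :=
    Int.one_le_abs (by simpa using (intRep_eq_zero_iff (p i)).not.mpr hi)
  refine le_trans ?_ (pNorm_coord p i)
  rw [abs_div, abs_of_nonneg hM.le]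
  have h2 : (1:ℝ) ≤ |(intRep M (p i) : ℝ)| := by
    rw [← Int.cast_abs]; exact_mod_cast h1
  have hpi := Real.pi_pos
  rw [div_le_div_iff₀ hM hM, abs_mul, abs_of_nonneg (by positivity : (0:ℝ) ≤ 2 * Real.pi)]
  nlinarith [mul_le_mul_of_nonneg_right
    (by nlinarith : 2 * Real.pi ≤ 2 * Real.pi * |(intRep M (p i) : ℝ)|) hM.le]

lemma pNorm_upper (hodd : Odd M) [NeZero M] (p : Fin d → ZMod M) :
    pNorm M p ≤ Real.pi * Real.sqrt d := by
  have hM : (0:ℝ) < M := Nat.cast_pos.mpr (Nat.pos_of_ne_zero (NeZero.ne M))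
  have hterm : ∀ i : Fin d, (2 * Real.pi * (intRep M (p i) : ℝ) / M) ^ 2 ≤ Real.pi ^ 2 := by
    intro i
    have hb := intRep_bound hodd (p i)
    have hb0 : 2 * |intRep M (p i)| ≤ (M:ℤ) := by omega
    have hb' : 2 * |(intRep M (p i) : ℝ)| ≤ M := by
      rw [← Int.cast_abs]; exact_mod_cast hb0
    have habs : |2 * Real.pi * (intRep M (p i) : ℝ) / M| ≤ Real.pi := by
      rw [abs_div, abs_of_nonneg hM.le, div_le_iff₀ hM, abs_mul,
        abs_of_nonneg (by positivity : (0:ℝ) ≤ 2 * Real.pi)]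
      nlinarith [Real.pi_pos]
    calc (2 * Real.pi * (intRep M (p i) : ℝ) / M) ^ 2
        = |2 * Real.pi * (intRep M (p i) : ℝ) / M| ^ 2 := (sq_abs _).symm
      _ ≤ Real.pi ^ 2 := pow_le_pow_left₀ (abs_nonneg _) habs 2
  unfold pNorm
  calc Real.sqrt (∑ i, (2 * Real.pi * (intRep M (p i) : ℝ) / M) ^ 2)
      ≤ Real.sqrt (∑ _i : Fin d, Real.pi ^ 2) :=
        Real.sqrt_le_sqrt (Finset.sum_le_sum (fun i _ => hterm i))
    _ = Real.pi * Real.sqrt d := by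
        rw [Finset.sum_const, Finset.card_univ, Fintype.card_fin, nsmul_eq_mul]
        rw [Real.sqrt_mul (by positivity), Real.sqrt_sq Real.pi_pos.le, mul_comm]
end

open Real in
section
variable {L : ℕ} {r : ℝ}

lemma annSet_bddAbove (hL : 3 ≤ L) (hr : 0 < r) :
    BddAbove {j : ℕ | r < Real.pi * (L : ℝ) ^ (1 - (j : ℤ))} := by
  have hx1 : (1:ℝ) < L := by exact_mod_cast lt_of_lt_of_le (by norm_num) hL
  obtain ⟨J₀, hJ₀⟩ := pow_unbounded_of_one_lt (Real.pi / r) hx1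
  refine ⟨J₀, fun j hj => ?_⟩
  simp only [Set.mem_setOf_eq] at hj
  by_contra hcon
  push_neg at hcon
  have h1 : (1 - (j:ℤ)) ≤ -(J₀:ℤ) := by omega
  have h2 : (L:ℝ) ^ (1 - (j:ℤ)) ≤ (L:ℝ) ^ (-(J₀:ℤ)) := zpow_le_zpow_right₀ hx1.le h1
  have h3 : Real.pi * (L:ℝ) ^ (-(J₀:ℤ)) < r := by
    rw [zpow_neg, zpow_natCast]
    rw [div_lt_iff₀ hr] at hJ₀
    have hpow : (0:ℝ) < (L:ℝ) ^ J₀ := by positivity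
    rw [mul_inv_lt_iff₀ hpow]
    linarith
  nlinarith [Real.pi_pos]

lemma annIdx_lower (hL : 3 ≤ L) (hr : 0 < r) :
    Real.pi * (L : ℝ) ^ (-(annIdx L r : ℤ)) ≤ r := by
  have hx1 : (1:ℝ) < L := by exact_mod_cast lt_of_lt_of_le (by norm_num) hL
  set S := {j : ℕ | r < Real.pi * (L : ℝ) ^ (1 - (j : ℤ))} with hS
  by_cases hne : S.Nonempty
  · have hnotmem : annIdx L r + 1 ∉ S := by
      intro hmem
      have := le_csSup (annSet_bddAbove hL hr) hmem
      simp only [annIdx] at this ⊢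
      omega
    simp only [hS, Set.mem_setOf_eq, not_lt] at hnotmem
    have : (1 - ((annIdx L r + 1 : ℕ) : ℤ)) = -(annIdx L r : ℤ) := by push_cast; ring
    rwa [this] at hnotmem
  · have h0 : annIdx L r = 0 := by
      rw [annIdx, ← hS, Set.not_nonempty_iff_eq_empty.mp hne, csSup_empty]
      rfl
    have h0mem : (0:ℕ) ∉ S := fun h => hne ⟨0, h⟩
    simp only [hS, Set.mem_setOf_eq, not_lt] at h0mem
    rw [h0]
    calc Real.pi * (L:ℝ) ^ (-(0:ℕ) : ℤ) = Real.pi := by norm_num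
      _ ≤ Real.pi * (L:ℝ) ^ (1 - ((0:ℕ):ℤ)) := by
          have : (1:ℝ) ≤ (L:ℝ) ^ (1 - ((0:ℕ):ℤ)) := by
            norm_num; exact_mod_cast le_trans (by norm_num) hL
          nlinarith [Real.pi_pos]
      _ ≤ r := h0mem

lemma annIdx_upper (hL : 3 ≤ L) (hr : 0 < r) (h1 : 1 ≤ annIdx L r) :
    r < Real.pi * (L : ℝ) ^ (1 - (annIdx L r : ℤ)) := by
  set S := {j : ℕ | r < Real.pi * (L : ℝ) ^ (1 - (j : ℤ))} with hS
  have hne : S.Nonempty := by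
    by_contra hne
    have : annIdx L r = 0 := by
      rw [annIdx, ← hS, Set.not_nonempty_iff_eq_empty.mp hne, csSup_empty]; rfl
    omega
  have := Nat.sSup_mem hne (annSet_bddAbove hL hr)
  simpa [hS, annIdx] using this

lemma annIdx_le (hL : 3 ≤ L) (hr : 0 < r) {N : ℕ}
    (hN : 2 * Real.pi * ((L : ℝ) ^ N)⁻¹ ≤ r) : annIdx L r ≤ N := by
  have hx1 : (1:ℝ) < L := by exact_mod_cast lt_of_lt_of_le (by norm_num) hL
  by_contra hcon
  push_neg at hcon
  have hup := annIdx_upper hL hr (by omega)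
  have h2 : (1 - (annIdx L r : ℤ)) ≤ -(N:ℤ) := by omega
  have h3 : (L:ℝ) ^ (1 - (annIdx L r : ℤ)) ≤ (L:ℝ) ^ (-(N:ℤ)) := zpow_le_zpow_right₀ hx1.le h2
  have h4 : (L:ℝ) ^ (-(N:ℤ)) = ((L:ℝ) ^ N)⁻¹ := by rw [zpow_neg, zpow_natCast]
  nlinarith [Real.pi_pos]
end

open Real Finset in
lemma fiber_card {d L N : ℕ} (hL : 3 ≤ L) {j : ℕ} (hj : j ≤ N) [NeZero (L ^ N)] :
    ((Finset.univ.filter (fun p : Fin d → ZMod (L ^ N) => p ≠ 0)).filter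
      (fun p => annIdx L (pNorm (L ^ N) p) = j)).card ≤ (3 * L ^ (N + 1 - j)) ^ d := by
  have hLpos : 0 < L := by omega
  rcases Nat.eq_zero_or_pos j with hj0 | hj1
  · subst hj0
    calc _ ≤ (Finset.univ : Finset (Fin d → ZMod (L ^ N))).card :=
          Finset.card_le_card (by intro p hp; exact Finset.mem_univ p)
      _ = (L ^ N) ^ d := by
          rw [Finset.card_univ, Fintype.card_fun, ZMod.card, Fintype.card_fin]
      _ ≤ (3 * L ^ (N + 1 - 0)) ^ d := by
          apply Nat.pow_le_pow_left
          calc L ^ N ≤ L ^ (N + 1 - 0) := Nat.pow_le_pow_right hLpos (by omega)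
            _ ≤ 3 * L ^ (N + 1 - 0) := by omega
  · set M := L ^ N with hM
    set t := L ^ (N + 1 - j) with ht
    have htpos : 1 ≤ t := Nat.one_le_pow _ _ hLpos
    set T : Finset (ZMod M) := Finset.univ.filter (fun z => |intRep M z| ≤ (t:ℤ)) with hT
    have hcardT : T.card ≤ 3 * t := by
      have h1 : T.card ≤ (Finset.Icc (-(t:ℤ)) (t:ℤ)).card := by
        apply Finset.card_le_card_of_injOn (intRep M)
        · intro z hz
          simp only [hT, Finset.mem_coe, Finset.mem_filter] at hz
          rw [Finset.mem_coe, Finset.mem_Icc]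
          constructor <;> [skip; skip] <;> cases' abs_le.mp hz.2 with h1 h2 <;> omega
        · intro a _ b _ hab
          exact intRep_injective hab
      rw [Int.card_Icc] at h1
      have : ((t:ℤ) + 1 - -(t:ℤ)).toNat = 2 * t + 1 := by omega
      rw [this] at h1
      omega
    have hsub : ((Finset.univ.filter (fun p : Fin d → ZMod M => p ≠ 0)).filter
        (fun p => annIdx L (pNorm M p) = j)) ⊆ Fintype.piFinset (fun _ : Fin d => T) := by
      intro p hp
      simp only [Finset.mem_filter, Finset.mem_univ, true_and] at hp
      obtain ⟨hp0, hpj⟩ := hp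
      have hMreal : ((M:ℕ):ℝ) = (L:ℝ) ^ N := by rw [hM]; push_cast; ring
      have hMpos : (0:ℝ) < (M:ℝ) := Nat.cast_pos.mpr (Nat.pos_of_ne_zero (NeZero.ne M))
      have hrpos : 0 < pNorm M p := by
        have := pNorm_lower hp0
        have : (0:ℝ) < 2 * Real.pi / M := by positivity
        linarith [pNorm_lower hp0]
      have hup := annIdx_upper hL hrpos (by omega : 1 ≤ annIdx L (pNorm M p))
      rw [hpj] at hup
      rw [Fintype.mem_piFinset]
      intro i
      simp only [hT, Finset.mem_filter, Finset.mem_univ, true_and]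
      have hco := pNorm_coord p i
      have hlt : |2 * Real.pi * (intRep M (p i) : ℝ) / M| < Real.pi * (L:ℝ) ^ (1 - (j:ℤ)) :=
        lt_of_le_of_lt hco hup
      -- turn into integer bound
      have habs : |2 * Real.pi * (intRep M (p i) : ℝ) / M|
          = 2 * Real.pi * |(intRep M (p i) : ℝ)| / M := by
        rw [abs_div, abs_of_nonneg hMpos.le, abs_mul,
          abs_of_nonneg (by positivity : (0:ℝ) ≤ 2 * Real.pi)]
      rw [habs, div_lt_iff₀ hMpos] at hlt
      have hMx : Real.pi * (L:ℝ) ^ (1 - (j:ℤ)) * (M:ℝ) = Real.pi * (L:ℝ) ^ (N + 1 - j : ℕ) := by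
        rw [hMreal, mul_assoc, ← zpow_natCast (L:ℝ) N, ← zpow_add₀ (by positivity : (L:ℝ) ≠ 0)]
        have hexp : (1 - (j:ℤ) + N) = ((N + 1 - j : ℕ) : ℤ) := by omega
        rw [hexp, zpow_natCast]
      rw [hMx] at hlt
      have htreal : ((t:ℕ):ℝ) = (L:ℝ) ^ (N + 1 - j : ℕ) := by rw [ht]; push_cast; ring
      have h2 : 2 * |(intRep M (p i) : ℝ)| < (t:ℝ) := by
        rw [htreal]
        nlinarith [Real.pi_pos, abs_nonneg ((intRep M (p i) : ℝ))]
      have h3 : 2 * |intRep M (p i)| < (t:ℤ) := by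
        have : ((2 * |intRep M (p i)| : ℤ) : ℝ) < ((t:ℤ):ℝ) := by
          push_cast [Int.cast_abs] at h2 ⊢
          convert h2 using 2 <;> norm_num
        exact_mod_cast this
      omega
    calc _ ≤ (Fintype.piFinset (fun _ : Fin d => T)).card := Finset.card_le_card hsub
      _ = T.card ^ d := by rw [Fintype.card_piFinset]; simp
      _ ≤ (3 * t) ^ d := Nat.pow_le_pow_left hcardT d

open Real Finset in
lemma zpow_point_bound {n : ℕ} {a b r : ℝ} (ha : 0 < a) (har : a ≤ r) (hrb : r ≤ b) :
    r ^ ((n:ℤ) - 2) ≤ b ^ n / a ^ 2 := by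
  have hr : 0 < r := lt_of_lt_of_le ha har
  have hb : 0 < b := lt_of_lt_of_le hr hrb
  rw [zpow_sub₀ hr.ne', zpow_natCast, show ((2:ℤ)) = ((2:ℕ):ℤ) by norm_num, zpow_natCast]
  exact div_le_div₀ (pow_nonneg hb.le n) (pow_le_pow_left₀ hr.le hrb n) (by positivity)
    (pow_le_pow_left₀ ha.le har 2)

open Real Finset in
lemma point_bound {d : ℕ} (n : ℕ) (hd : 1 ≤ d) {L N : ℕ} (hodd : Odd L) (hL : 3 ≤ L)
    [NeZero (L ^ N)] {p : Fin d → ZMod (L ^ N)} (hp : p ≠ 0) :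
    pNorm (L ^ N) p ^ ((n:ℤ) - 2) ≤
      (Real.pi * Real.sqrt d) ^ n / Real.pi ^ 2 *
        (L : ℝ) ^ ((n : ℤ) - (annIdx L (pNorm (L ^ N) p) : ℤ) * ((n : ℤ) - 2)) := by
  have hx1 : (1:ℝ) < L := by exact_mod_cast lt_of_lt_of_le (by norm_num) hL
  have hx0 : (0:ℝ) < L := by linarith
  set r := pNorm (L ^ N) p with hrdef
  set j := annIdx L r with hjdef
  have hMpos : (0:ℝ) < ((L ^ N : ℕ) : ℝ) := Nat.cast_pos.mpr (Nat.pos_of_ne_zero (NeZero.ne _))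
  have hrpos : 0 < r := by
    have h := pNorm_lower hp
    have : (0:ℝ) < 2 * Real.pi / (L ^ N : ℕ) := by positivity
    linarith
  have hd1 : (1:ℝ) ≤ Real.sqrt d := by
    rw [show (1:ℝ) = Real.sqrt 1 by simp]
    exact Real.sqrt_le_sqrt (by exact_mod_cast hd)
  have ha : (0:ℝ) < Real.pi * (L:ℝ) ^ (-(j:ℤ)) := by positivity
  have har : Real.pi * (L:ℝ) ^ (-(j:ℤ)) ≤ r := annIdx_lower hL hrpos
  have hrb : r ≤ Real.pi * Real.sqrt d * (L:ℝ) ^ (1 - (j:ℤ)) := by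
    rcases Nat.eq_zero_or_pos j with h0 | h1
    · rw [h0]
      have h2 := pNorm_upper (hodd.pow) p
      have h3 : (1:ℝ) ≤ (L:ℝ) ^ (1 - ((0:ℕ):ℤ)) := by
        norm_num; linarith
      nlinarith [Real.pi_pos]
    · have h2 := annIdx_upper hL hrpos h1
      have h3 : Real.pi * (L:ℝ) ^ (1 - (j:ℤ)) ≤ Real.pi * Real.sqrt d * (L:ℝ) ^ (1 - (j:ℤ)) := by
        have : (0:ℝ) < (L:ℝ) ^ (1 - (j:ℤ)) := by positivity
        nlinarith [Real.pi_pos]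
      exact le_trans h2.le h3
  refine le_trans (zpow_point_bound ha har hrb) (le_of_eq ?_)
  rw [mul_pow, mul_pow, mul_pow, ← zpow_natCast ((L:ℝ) ^ (1 - (j:ℤ))) n, ← zpow_mul,
    ← zpow_natCast ((L:ℝ) ^ (-(j:ℤ))) 2, ← zpow_mul]
  push_cast
  rw [show Real.pi ^ n * Real.sqrt d ^ n * (L:ℝ) ^ ((1 - (j:ℤ)) * n) /
        (Real.pi ^ 2 * (L:ℝ) ^ (-(j:ℤ) * 2)) =
      Real.pi ^ n * Real.sqrt d ^ n / Real.pi ^ 2 *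
        ((L:ℝ) ^ ((1 - (j:ℤ)) * n) / (L:ℝ) ^ (-(j:ℤ) * 2)) from by ring]
  rw [← zpow_sub₀ (ne_of_gt hx0),
    show ((1 - (j:ℤ)) * n - -(j:ℤ) * 2) = (n:ℤ) - (j:ℤ) * ((n:ℤ) - 2) from by ring]

open Real Finset in
lemma master {d : ℕ} (n : ℕ) (hd : 1 ≤ d) {L N : ℕ} (hodd : Odd L) (hL : 3 ≤ L)
    [NeZero (L ^ N)] (W : ℕ → ℝ) (hW : ∀ j, 0 ≤ W j) :
    ((L : ℝ) ^ (d * N))⁻¹ *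
        ∑ p ∈ Finset.univ.filter (fun p : Fin d → ZMod (L ^ N) => p ≠ 0),
          W (annIdx L (pNorm (L ^ N) p)) * pNorm (L ^ N) p ^ ((n : ℤ) - 2) ≤
      3 ^ d * ((Real.pi * Real.sqrt d) ^ n / Real.pi ^ 2) * (L : ℝ) ^ ((d : ℤ) + (n : ℤ)) *
        ∑ j ∈ Finset.range (N + 1), W j * (L : ℝ) ^ (-(j : ℤ) * ((d : ℤ) + (n : ℤ) - 2)) := by
  have hx1 : (1:ℝ) < L := by exact_mod_cast lt_of_lt_of_le (by norm_num) hL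
  have hx0 : (0:ℝ) < L := by linarith
  have hxne : (L:ℝ) ≠ 0 := ne_of_gt hx0
  set B : ℝ := (Real.pi * Real.sqrt d) ^ n / Real.pi ^ 2 with hB
  have hBpos : 0 < B := by
    have : (0:ℝ) < Real.sqrt d := Real.sqrt_pos.mpr (by exact_mod_cast hd)
    positivity
  set S := Finset.univ.filter (fun p : Fin d → ZMod (L ^ N) => p ≠ 0) with hS
  have hmaps : ∀ p ∈ S, annIdx L (pNorm (L ^ N) p) ∈ Finset.range (N + 1) := by
    intro p hp
    simp only [hS, Finset.mem_filter] at hp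
    rw [Finset.mem_range, Nat.lt_succ_iff]
    have hMpos : (0:ℝ) < ((L ^ N : ℕ) : ℝ) := Nat.cast_pos.mpr (Nat.pos_of_ne_zero (NeZero.ne _))
    have hrpos : 0 < pNorm (L ^ N) p := by
      have h := pNorm_lower hp.2
      have : (0:ℝ) < 2 * Real.pi / ((L ^ N : ℕ) : ℝ) := by positivity
      linarith
    apply annIdx_le hL hrpos
    have : ((L ^ N : ℕ) : ℝ) = (L:ℝ) ^ N := by push_cast; ring
    rw [← this]
    exact pNorm_lower hp.2
  rw [← Finset.sum_fiberwise_of_maps_to hmaps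
    (fun p => W (annIdx L (pNorm (L ^ N) p)) * pNorm (L ^ N) p ^ ((n : ℤ) - 2))]
  rw [Finset.mul_sum, Finset.mul_sum]
  apply Finset.sum_le_sum
  intro j hj
  rw [Finset.mem_range, Nat.lt_succ_iff] at hj
  -- inner sum bound
  have hinner : ∑ p ∈ S.filter (fun p => annIdx L (pNorm (L ^ N) p) = j),
      W (annIdx L (pNorm (L ^ N) p)) * pNorm (L ^ N) p ^ ((n : ℤ) - 2) ≤
      ((3 * L ^ (N + 1 - j)) ^ d : ℕ) * (W j * (B * (L:ℝ) ^ ((n:ℤ) - (j:ℤ) * ((n:ℤ) - 2)))) := by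
    have hle : ∀ p ∈ S.filter (fun p => annIdx L (pNorm (L ^ N) p) = j),
        W (annIdx L (pNorm (L ^ N) p)) * pNorm (L ^ N) p ^ ((n : ℤ) - 2) ≤
        W j * (B * (L:ℝ) ^ ((n:ℤ) - (j:ℤ) * ((n:ℤ) - 2))) := by
      intro p hp
      simp only [hS, Finset.mem_filter, Finset.mem_univ, true_and] at hp
      obtain ⟨hp0, hpj⟩ := hp
      rw [hpj]
      apply mul_le_mul_of_nonneg_left _ (hW j)
      have := point_bound n hd hodd hL hp0
      rw [hpj] at this
      exact this
    calc _ ≤ (S.filter (fun p => annIdx L (pNorm (L ^ N) p) = j)).card •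
          (W j * (B * (L:ℝ) ^ ((n:ℤ) - (j:ℤ) * ((n:ℤ) - 2)))) :=
        Finset.sum_le_card_nsmul _ _ _ hle
      _ ≤ _ := by
        rw [nsmul_eq_mul]
        apply mul_le_mul_of_nonneg_right
        · exact_mod_cast Nat.cast_le.mpr (fiber_card hL hj)
        · have : (0:ℝ) ≤ (L:ℝ) ^ ((n:ℤ) - (j:ℤ) * ((n:ℤ) - 2)) := le_of_lt (by positivity)
          exact mul_nonneg (hW j) (mul_nonneg hBpos.le this)
  calc ((L : ℝ) ^ (d * N))⁻¹ * ∑ p ∈ S.filter (fun p => annIdx L (pNorm (L ^ N) p) = j),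
        W (annIdx L (pNorm (L ^ N) p)) * pNorm (L ^ N) p ^ ((n : ℤ) - 2)
      ≤ ((L : ℝ) ^ (d * N))⁻¹ *
        (((3 * L ^ (N + 1 - j)) ^ d : ℕ) * (W j * (B * (L:ℝ) ^ ((n:ℤ) - (j:ℤ) * ((n:ℤ) - 2))))) := by
        apply mul_le_mul_of_nonneg_left hinner
        positivity
    _ = 3 ^ d * B * (L : ℝ) ^ ((d : ℤ) + (n : ℤ)) *
        (W j * (L : ℝ) ^ (-(j : ℤ) * ((d : ℤ) + (n : ℤ) - 2))) := by
        have hcast : (((3 * L ^ (N + 1 - j)) ^ d : ℕ) : ℝ)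
            = 3 ^ d * (L:ℝ) ^ ((d * (N + 1 - j) : ℕ) : ℤ) := by
          rw [zpow_natCast]
          push_cast [mul_pow, ← pow_mul]
          rw [Nat.mul_comm]
        have hnpow : ((L : ℝ) ^ (d * N))⁻¹ = (L:ℝ) ^ (-((d * N : ℕ) : ℤ)) := by
          rw [zpow_neg, zpow_natCast]
        have he : ((N + 1 - j : ℕ) : ℤ) = (N:ℤ) + 1 - j := by omega
        have h1 : ((d * (N + 1 - j) : ℕ) : ℤ) = (d:ℤ) * ((N:ℤ) + 1 - (j:ℤ)) := by
          rw [Nat.cast_mul, he]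
        have hexp : (-((d * N : ℕ) : ℤ) + ((d * (N + 1 - j) : ℕ) : ℤ))
            + ((n:ℤ) - (j:ℤ) * ((n:ℤ) - 2))
            = ((d : ℤ) + (n : ℤ)) + (-(j : ℤ) * ((d : ℤ) + (n : ℤ) - 2)) := by
          rw [h1]; push_cast; ring
        rw [hcast, hnpow,
          show ((L : ℝ) ^ (-((d * N : ℕ) : ℤ)) *
              (3 ^ d * (L:ℝ) ^ ((d * (N + 1 - j) : ℕ) : ℤ) *
                (W j * (B * (L:ℝ) ^ ((n:ℤ) - (j:ℤ) * ((n:ℤ) - 2)))))) =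
            3 ^ d * B * W j * ((L : ℝ) ^ (-((d * N : ℕ) : ℤ)) *
              (L:ℝ) ^ ((d * (N + 1 - j) : ℕ) : ℤ) * (L:ℝ) ^ ((n:ℤ) - (j:ℤ) * ((n:ℤ) - 2)))
            from by ring,
          ← zpow_add₀ hxne, ← zpow_add₀ hxne, hexp, zpow_add₀ hxne]
        ring

open Real Finset in
section

lemma rpow_base_anti {x y e : ℝ} (hx : 0 < x) (hxy : x ≤ y) (he : e ≤ 0) :
    y ^ e ≤ x ^ e := by
  have hy : 0 < y := lt_of_lt_of_le hx hxy
  have h1 : x ^ (-e) ≤ y ^ (-e) := Real.rpow_le_rpow hx.le hxy (neg_nonneg.mpr he)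
  have hx1 : 0 < x ^ (-e) := Real.rpow_pos_of_pos hx _
  have hy1 : 0 < y ^ (-e) := Real.rpow_pos_of_pos hy _
  rw [show e = -(-e) by ring, Real.rpow_neg hx.le, Real.rpow_neg hy.le]
  exact inv_anti₀ hx1 h1

lemma geom_third (K : ℕ) : ∑ i ∈ Finset.range K, (1/3 : ℝ) ^ i ≤ 3/2 := by
  have h : ∑ i ∈ Finset.range K, (1/3 : ℝ) ^ i = ((1/3:ℝ) ^ K - 1) / (1/3 - 1) :=
    geom_sum_eq (by norm_num) K
  rw [h]
  have : (0:ℝ) ≤ (1/3:ℝ) ^ K := by positivity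
  have h2 : (1/3:ℝ) ^ K ≤ 1 := pow_le_one₀ (by norm_num) (by norm_num)
  rw [div_le_iff_of_neg (by norm_num : (1/3:ℝ) - 1 < 0)]
  linarith

lemma sum_low (s : ℕ) (q : ℝ) (hq : 1 ≤ q) :
    ∃ C : ℝ, 1 ≤ C ∧ ∀ x : ℝ, 3 ≤ x → ∀ K : ℕ,
      ∑ m ∈ Finset.Icc 1 K, q ^ m * x ^ ((m:ℝ) * ((s:ℝ) - 3 - (m:ℝ))) ≤
        C * x ^ (((s:ℝ) - 3) ^ 2 / 4) := by
  obtain ⟨B, hB⟩ := pow_unbounded_of_one_lt q (by norm_num : (1:ℝ) < 3)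
  set m₂ : ℕ := s + B + 1 with hm₂
  refine ⟨m₂ * q ^ m₂ + 2, ?_, ?_⟩
  · have : (1:ℝ) ≤ q ^ m₂ := one_le_pow₀ hq
    have : (0:ℝ) ≤ (m₂:ℝ) := Nat.cast_nonneg _
    nlinarith
  intro x hx K
  have hx1 : (1:ℝ) < x := by linarith
  have hx0 : (0:ℝ) < x := by linarith
  have hE : (0:ℝ) ≤ ((s:ℝ) - 3) ^ 2 / 4 := by positivity
  have hxE : (1:ℝ) ≤ x ^ (((s:ℝ) - 3) ^ 2 / 4) := Real.one_le_rpow hx1.le hE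
  rw [← Finset.sum_filter_add_sum_filter_not (Finset.Icc 1 K) (fun m => m ≤ m₂)]
  have hbound1 : ∑ m ∈ (Finset.Icc 1 K).filter (fun m => m ≤ m₂),
      q ^ m * x ^ ((m:ℝ) * ((s:ℝ) - 3 - (m:ℝ))) ≤ m₂ * q ^ m₂ * x ^ (((s:ℝ) - 3) ^ 2 / 4) := by
    have hterm : ∀ m ∈ (Finset.Icc 1 K).filter (fun m => m ≤ m₂),
        q ^ m * x ^ ((m:ℝ) * ((s:ℝ) - 3 - (m:ℝ))) ≤ q ^ m₂ * x ^ (((s:ℝ) - 3) ^ 2 / 4) := by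
      intro m hm
      simp only [Finset.mem_filter, Finset.mem_Icc] at hm
      apply mul_le_mul (pow_le_pow_right₀ hq hm.2)
      · apply Real.rpow_le_rpow_of_exponent_le hx1.le
        nlinarith [sq_nonneg ((m:ℝ) - ((s:ℝ) - 3) / 2)]
      · positivity
      · positivity
    calc _ ≤ ((Finset.Icc 1 K).filter (fun m => m ≤ m₂)).card •
          (q ^ m₂ * x ^ (((s:ℝ) - 3) ^ 2 / 4)) := Finset.sum_le_card_nsmul _ _ _ hterm
      _ ≤ _ := by
        rw [nsmul_eq_mul, ← mul_assoc]
        apply mul_le_mul_of_nonneg_right _ (by positivity)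
        apply mul_le_mul_of_nonneg_right _ (by positivity)
        have hsub : (Finset.Icc 1 K).filter (fun m => m ≤ m₂) ⊆ Finset.Icc 1 m₂ := by
          intro m hm
          simp only [Finset.mem_filter, Finset.mem_Icc] at hm ⊢
          exact ⟨hm.1.1, hm.2⟩
        have := Finset.card_le_card hsub
        rw [Nat.card_Icc] at this
        exact_mod_cast le_trans (Nat.cast_le.mpr this) (by norm_num)
  have hbound2 : ∑ m ∈ (Finset.Icc 1 K).filter (fun m => ¬ m ≤ m₂),
      q ^ m * x ^ ((m:ℝ) * ((s:ℝ) - 3 - (m:ℝ))) ≤ 3/2 := by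
    have hterm : ∀ m ∈ (Finset.Icc 1 K).filter (fun m => ¬ m ≤ m₂),
        q ^ m * x ^ ((m:ℝ) * ((s:ℝ) - 3 - (m:ℝ))) ≤ (1/3:ℝ) ^ m := by
      intro m hm
      simp only [Finset.mem_filter, Finset.mem_Icc, not_le] at hm
      have hmm : m₂ < m := hm.2
      have hneg : (s:ℝ) - 3 - (m:ℝ) ≤ 0 := by
        have : (m₂:ℝ) < m := by exact_mod_cast hmm
        have : (s:ℝ) ≤ m₂ := by
          rw [hm₂]; push_cast; linarith [Nat.cast_nonneg (α := ℝ) B]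
        linarith
      have hxe : x ^ ((m:ℝ) * ((s:ℝ) - 3 - (m:ℝ))) ≤ (3:ℝ) ^ ((m:ℝ) * ((s:ℝ) - 3 - (m:ℝ))) :=
        rpow_base_anti (by norm_num) hx
          (mul_nonpos_of_nonneg_of_nonpos (Nat.cast_nonneg m) hneg)
      have h3e : (3:ℝ) ^ ((m:ℝ) * ((s:ℝ) - 3 - (m:ℝ)))
          = ((3:ℝ) ^ ((s:ℝ) - 3 - (m:ℝ))) ^ m := by
        rw [mul_comm, Real.rpow_mul (by norm_num), Real.rpow_natCast]
      calc q ^ m * x ^ ((m:ℝ) * ((s:ℝ) - 3 - (m:ℝ)))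
          ≤ q ^ m * ((3:ℝ) ^ ((s:ℝ) - 3 - (m:ℝ))) ^ m := by
            rw [← h3e]
            exact mul_le_mul_of_nonneg_left hxe (by positivity)
        _ = (q * (3:ℝ) ^ ((s:ℝ) - 3 - (m:ℝ))) ^ m := by rw [mul_pow]
        _ ≤ (1/3:ℝ) ^ m := by
            apply pow_le_pow_left₀ (by positivity)
            have h1 : q ≤ (3:ℝ) ^ (B:ℝ) := by
              rw [Real.rpow_natCast]; exact hB.le
            have h2 : (3:ℝ) ^ ((s:ℝ) - 3 - (m:ℝ)) ≤ (3:ℝ) ^ (-(B:ℝ) - 1) := by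
              apply Real.rpow_le_rpow_of_exponent_le (by norm_num)
              have : (m₂:ℝ) < m := by exact_mod_cast hmm
              rw [hm₂] at this; push_cast at this
              linarith
            calc q * (3:ℝ) ^ ((s:ℝ) - 3 - (m:ℝ)) ≤ (3:ℝ) ^ (B:ℝ) * (3:ℝ) ^ (-(B:ℝ) - 1) := by
                  apply mul_le_mul h1 h2 (by positivity) (by positivity)
              _ = (3:ℝ) ^ ((B:ℝ) + (-(B:ℝ) - 1)) := (Real.rpow_add (by norm_num) _ _).symm
              _ = (1/3:ℝ) := by
                  rw [show (B:ℝ) + (-(B:ℝ) - 1) = ((-1:ℤ):ℝ) by push_cast; ring,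
                    Real.rpow_intCast]
                  norm_num
    calc _ ≤ ∑ m ∈ (Finset.Icc 1 K).filter (fun m => ¬ m ≤ m₂), (1/3:ℝ) ^ m :=
          Finset.sum_le_sum hterm
      _ ≤ ∑ m ∈ Finset.range (K + 1), (1/3:ℝ) ^ m := by
          apply Finset.sum_le_sum_of_subset_of_nonneg
          · intro m hm
            simp only [Finset.mem_filter, Finset.mem_Icc] at hm
            rw [Finset.mem_range]
            omega
          · intros; positivity
      _ ≤ 3/2 := geom_third (K + 1)
  have h32 : (3/2 : ℝ) ≤ 2 * x ^ (((s:ℝ) - 3) ^ 2 / 4) := by nlinarith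
  nlinarith [hbound1, hbound2]
end

open Real Finset in
section

lemma Mstep_nonneg {c : ℝ} (hc : 1 ≤ c) (L k j : ℕ) : 0 ≤ Mstep c L k j := by
  unfold Mstep
  split
  · norm_num
  · have h0 : (0:ℝ) ≤ c := by linarith
    positivity

lemma MstepT_nonneg {c : ℝ} (hc : 1 ≤ c) (L k j : ℕ) : 0 ≤ MstepT c L k j := by
  unfold MstepT
  have h0 : (0:ℝ) ≤ c := by linarith
  split
  · have : (0:ℝ) ≤ (L:ℝ) := Nat.cast_nonneg _
    rcases eq_or_lt_of_le this with h | h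
    · rw [← h]
      rcases eq_or_ne (4 * ((k:ℤ) - (j:ℤ))) 0 with h4 | h4
      · rw [h4, zpow_zero]
        norm_num
      · rw [zero_zpow _ h4]
        norm_num
    · positivity
  · positivity

lemma MstepT_le {c : ℝ} (hc : 1 ≤ c) {L : ℕ} (hL : 3 ≤ L) (k j : ℕ) :
    MstepT c L k j ≤ c * (L:ℝ) ^ (8:ℕ) * Mstep c L k j := by
  have hx1 : (1:ℝ) < L := by exact_mod_cast lt_of_lt_of_le (by norm_num) hL
  have hx0 : (0:ℝ) < L := by linarith
  have hc8 : (1:ℝ) ≤ c * (L:ℝ) ^ (8:ℕ) := by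
    have : (1:ℝ) ≤ (L:ℝ) ^ (8:ℕ) := one_le_pow₀ hx1.le
    nlinarith
  unfold Mstep MstepT
  split
  next h =>
    rw [mul_one]
    apply mul_le_of_le_one_right (by positivity)
    apply zpow_le_one_of_nonpos₀ hx1.le
    omega
  next h =>
    have hv : (0:ℝ) ≤ c ^ (k - j) * ((L:ℝ) ^ ((k - j) * (k - j + 1) / 2))⁻¹ := by positivity
    nlinarith

lemma Mstep_le_MstepT {c : ℝ} (hc : 1 ≤ c) {L : ℕ} (hL : 3 ≤ L) {k j : ℕ} (hj : j ≤ k) :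
    Mstep c L k j ≤ MstepT c L k j := by
  have hx1 : (1:ℝ) < L := by exact_mod_cast lt_of_lt_of_le (by norm_num) hL
  unfold Mstep MstepT
  split
  next h =>
    have hkj : k = j := by omega
    subst hkj
    simp only [sub_self, mul_zero, zpow_zero, mul_one]
    have : (1:ℝ) ≤ (L:ℝ) ^ (8:ℕ) := one_le_pow₀ hx1.le
    nlinarith
  next h => exact le_refl _
end

open Real Finset in
lemma scalar_a (d n : ℕ) (hd : 1 ≤ d) (c : ℝ) (hc : 1 ≤ c) :
    ∃ C : ℝ, 1 ≤ C ∧ ∀ L : ℕ, 3 ≤ L → ∀ N k' : ℕ, k' ≤ N →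
      ∑ j ∈ Finset.range (N + 1),
          Mstep c L k' j * MstepT c L k' j * (L:ℝ) ^ (-(j:ℤ) * ((d:ℤ) + (n:ℤ) - 2)) ≤
        C * (L:ℝ) ^ (ηconst d n - ((d:ℝ) + (n:ℝ)) - (k':ℝ) * ((d:ℝ) + (n:ℝ) - 2)) := by
  have hq : (1:ℝ) ≤ c ^ 2 := one_le_pow₀ hc
  obtain ⟨C₂, hC₂1, hC₂⟩ := sum_low (d + n) (c ^ 2) hq
  refine ⟨C₂ + 2 * c, by nlinarith, ?_⟩
  intro L hL N k' hk'
  have hx : (3:ℝ) ≤ (L:ℝ) := by exact_mod_cast hL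
  have hx1 : (1:ℝ) < (L:ℝ) := by linarith
  have hx0 : (0:ℝ) < (L:ℝ) := by linarith
  have hs1 : (1:ℝ) ≤ (d:ℝ) + (n:ℝ) := by
    have h1 : (1:ℝ) ≤ (d:ℝ) := by exact_mod_cast hd
    have h2 : (0:ℝ) ≤ (n:ℝ) := Nat.cast_nonneg _
    linarith
  rw [Finset.range_eq_Ico, ← Finset.sum_Ico_consecutive _ (Nat.zero_le k') (by omega : k' ≤ N + 1),
    ← Finset.range_eq_Ico]
  -- Low part
  have hlow : ∑ j ∈ Finset.range k',
      Mstep c L k' j * MstepT c L k' j * (L:ℝ) ^ (-(j:ℤ) * ((d:ℤ) + (n:ℤ) - 2))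
      ≤ C₂ * (L:ℝ) ^ ((((d:ℝ) + (n:ℝ) - 3) ^ 2 / 4) + (-(k':ℝ) * ((d:ℝ) + (n:ℝ) - 2))) := by
    have heq : ∑ j ∈ Finset.range k',
        Mstep c L k' j * MstepT c L k' j * (L:ℝ) ^ (-(j:ℤ) * ((d:ℤ) + (n:ℤ) - 2))
        = ∑ m ∈ Finset.Icc 1 k', (c ^ 2) ^ m *
            (L:ℝ) ^ ((m:ℝ) * (((d + n : ℕ):ℝ) - 3 - (m:ℝ))) *
            (L:ℝ) ^ (-(k':ℝ) * ((d:ℝ) + (n:ℝ) - 2)) := by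
      apply Finset.sum_nbij' (i := fun j => k' - j) (j := fun m => k' - m)
      · intro a ha
        rw [Finset.mem_range] at ha
        rw [Finset.mem_Icc]
        omega
      · intro a ha
        rw [Finset.mem_Icc] at ha
        rw [Finset.mem_range]
        omega
      · intro a ha
        rw [Finset.mem_range] at ha
        omega
      · intro a ha
        rw [Finset.mem_Icc] at ha
        omega
      · intro j hj
        rw [Finset.mem_range] at hj
        have hnk : ¬ k' ≤ j := by omega
        set m := k' - j with hmdef
        have hjm : j + m = k' := by omega
        have hjR : (j:ℝ) = (k':ℝ) - (m:ℝ) := by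
          have : ((j + m : ℕ):ℝ) = (k':ℝ) := by rw [hjm]
          push_cast at this
          linarith
        unfold Mstep MstepT
        rw [if_neg hnk, if_neg hnk]
        have hE2 : (m * (m + 1) / 2) * 2 = m * (m + 1) :=
          Nat.div_mul_cancel (Nat.even_mul_succ_self m).two_dvd
        have hEr : ((m * (m + 1) / 2 : ℕ):ℝ) * 2 = (m:ℝ) * ((m:ℝ) + 1) := by
          exact_mod_cast hE2
        have h1 : ((L:ℝ) ^ (m * (m + 1) / 2 : ℕ))⁻¹
            = (L:ℝ) ^ (-(((m * (m + 1) / 2 : ℕ)):ℝ)) := by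
          rw [← Real.rpow_natCast (L:ℝ), ← Real.rpow_neg hx0.le]
        have h2 : (L:ℝ) ^ (-(j:ℤ) * ((d:ℤ) + (n:ℤ) - 2))
            = (L:ℝ) ^ ((-(j:ℤ) * ((d:ℤ) + (n:ℤ) - 2) : ℤ) : ℝ) := (Real.rpow_intCast _ _).symm
        rw [h1, h2]
        have key : ∀ A B F G : ℝ, A + A + B = F + G →
            c ^ m * (L:ℝ) ^ A * (c ^ m * (L:ℝ) ^ A) * (L:ℝ) ^ B
              = (c ^ 2) ^ m * (L:ℝ) ^ F * (L:ℝ) ^ G := by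
          intro A B F G hFG
          rw [show c ^ m * (L:ℝ) ^ A * (c ^ m * (L:ℝ) ^ A) * (L:ℝ) ^ B
              = (c ^ 2) ^ m * ((L:ℝ) ^ A * (L:ℝ) ^ A * (L:ℝ) ^ B) from by ring,
            ← Real.rpow_add hx0, ← Real.rpow_add hx0, hFG, Real.rpow_add hx0]
          ring
        apply key
        push_cast
        rw [hjR]
        linear_combination (-1 : ℝ) * hEr
    rw [heq, ← Finset.sum_mul]
    have hsl := hC₂ (L:ℝ) hx k'
    calc _ ≤ (C₂ * (L:ℝ) ^ ((((d + n : ℕ):ℝ) - 3) ^ 2 / 4)) *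
          (L:ℝ) ^ (-(k':ℝ) * ((d:ℝ) + (n:ℝ) - 2)) :=
        mul_le_mul_of_nonneg_right hsl (le_of_lt (Real.rpow_pos_of_pos hx0 _))
      _ = C₂ * (L:ℝ) ^ ((((d:ℝ) + (n:ℝ) - 3) ^ 2 / 4) + (-(k':ℝ) * ((d:ℝ) + (n:ℝ) - 2))) := by
          rw [mul_assoc, ← Real.rpow_add hx0]
          push_cast
          ring_nf
  -- High part
  have hhigh : ∑ j ∈ Finset.Ico k' (N + 1),
      Mstep c L k' j * MstepT c L k' j * (L:ℝ) ^ (-(j:ℤ) * ((d:ℤ) + (n:ℤ) - 2))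
      ≤ (3/2 : ℝ) * c * (L:ℝ) ^ ((8:ℝ) + (-(k':ℝ) * ((d:ℝ) + (n:ℝ) - 2))) := by
    have hterm : ∀ j ∈ Finset.Ico k' (N + 1),
        Mstep c L k' j * MstepT c L k' j * (L:ℝ) ^ (-(j:ℤ) * ((d:ℤ) + (n:ℤ) - 2))
        ≤ c * (L:ℝ) ^ ((8:ℝ) + (-(k':ℝ) * ((d:ℝ) + (n:ℝ) - 2))) * (1/3:ℝ) ^ (j - k') := by
      intro j hj
      rw [Finset.mem_Ico] at hj
      have hkj : k' ≤ j := hj.1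
      set i := j - k' with hidef
      have hiR : (j:ℝ) = (k':ℝ) + (i:ℝ) := by
        have : ((k' + i : ℕ):ℝ) = (j:ℝ) := by rw [show k' + i = j from by omega]
        push_cast at this
        linarith
      unfold Mstep MstepT
      rw [if_pos hkj, if_pos hkj, one_mul]
      have h1 : (L:ℝ) ^ (8:ℕ) = (L:ℝ) ^ ((8:ℕ):ℝ) := (Real.rpow_natCast _ _).symm
      have h2 : (L:ℝ) ^ (4 * ((k':ℤ) - (j:ℤ))) = (L:ℝ) ^ ((4 * ((k':ℤ) - (j:ℤ)) : ℤ) : ℝ) :=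
        (Real.rpow_intCast _ _).symm
      have h3 : (L:ℝ) ^ (-(j:ℤ) * ((d:ℤ) + (n:ℤ) - 2))
          = (L:ℝ) ^ ((-(j:ℤ) * ((d:ℤ) + (n:ℤ) - 2) : ℤ) : ℝ) := (Real.rpow_intCast _ _).symm
      rw [h1, h2, h3, mul_assoc c, ← Real.rpow_add hx0, mul_assoc c, ← Real.rpow_add hx0]
      rw [show ((8:ℕ):ℝ) + ((4 * ((k':ℤ) - (j:ℤ)) : ℤ) : ℝ) + ((-(j:ℤ) * ((d:ℤ) + (n:ℤ) - 2) : ℤ) : ℝ)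
          = ((8:ℝ) + (-(k':ℝ) * ((d:ℝ) + (n:ℝ) - 2))) +
            (-(i:ℝ) * ((d:ℝ) + (n:ℝ) + 2)) from by push_cast; rw [hiR]; ring]
      rw [Real.rpow_add hx0, ← mul_assoc]
      apply mul_le_mul_of_nonneg_left _ (by positivity)
      calc (L:ℝ) ^ (-(i:ℝ) * ((d:ℝ) + (n:ℝ) + 2)) ≤ (L:ℝ) ^ (-(i:ℝ)) := by
            apply Real.rpow_le_rpow_of_exponent_le hx1.le
            have h4 : (0:ℝ) ≤ (i:ℝ) := Nat.cast_nonneg _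
            nlinarith
        _ ≤ (3:ℝ) ^ (-(i:ℝ)) :=
            rpow_base_anti (by norm_num) hx (neg_nonpos.mpr (Nat.cast_nonneg _))
        _ = (1/3:ℝ) ^ i := by
            rw [Real.rpow_neg (by norm_num), Real.rpow_natCast, one_div, inv_pow]
    calc _ ≤ ∑ j ∈ Finset.Ico k' (N + 1),
          c * (L:ℝ) ^ ((8:ℝ) + (-(k':ℝ) * ((d:ℝ) + (n:ℝ) - 2))) * (1/3:ℝ) ^ (j - k') :=
        Finset.sum_le_sum hterm
      _ = c * (L:ℝ) ^ ((8:ℝ) + (-(k':ℝ) * ((d:ℝ) + (n:ℝ) - 2))) *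
          ∑ j ∈ Finset.Ico k' (N + 1), (1/3:ℝ) ^ (j - k') := by rw [Finset.mul_sum]
      _ ≤ _ := by
        have hgeo : ∑ j ∈ Finset.Ico k' (N + 1), (1/3:ℝ) ^ (j - k') ≤ 3/2 := by
          rw [Finset.sum_Ico_eq_sum_range]
          have : ∀ i ∈ Finset.range (N + 1 - k'), (1/3:ℝ) ^ (k' + i - k') = (1/3:ℝ) ^ i := by
            intro i _
            congr 1
            omega
          rw [Finset.sum_congr rfl this]
          exact geom_third _
        have hpos : (0:ℝ) < c * (L:ℝ) ^ ((8:ℝ) + (-(k':ℝ) * ((d:ℝ) + (n:ℝ) - 2))) := by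
          have := Real.rpow_pos_of_pos hx0 ((8:ℝ) + (-(k':ℝ) * ((d:ℝ) + (n:ℝ) - 2)))
          nlinarith
        calc c * (L:ℝ) ^ ((8:ℝ) + (-(k':ℝ) * ((d:ℝ) + (n:ℝ) - 2))) *
              ∑ j ∈ Finset.Ico k' (N + 1), (1/3:ℝ) ^ (j - k')
            ≤ c * (L:ℝ) ^ ((8:ℝ) + (-(k':ℝ) * ((d:ℝ) + (n:ℝ) - 2))) * (3/2) :=
              mul_le_mul_of_nonneg_left hgeo hpos.le
          _ = (3/2 : ℝ) * c * (L:ℝ) ^ ((8:ℝ) + (-(k':ℝ) * ((d:ℝ) + (n:ℝ) - 2))) := by ring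
  -- Combine
  have hE1 : (((d:ℝ) + (n:ℝ) - 3) ^ 2 / 4) + (-(k':ℝ) * ((d:ℝ) + (n:ℝ) - 2))
      ≤ ηconst d n - ((d:ℝ) + (n:ℝ)) - (k':ℝ) * ((d:ℝ) + (n:ℝ) - 2) := by
    have h := le_max_left ((((d:ℝ) + (n:ℝ)) - 1) ^ 2 / 4) (((d:ℝ) + (n:ℝ)) + 6)
    rw [ηconst]
    nlinarith
  have hE2 : (8:ℝ) + (-(k':ℝ) * ((d:ℝ) + (n:ℝ) - 2))
      ≤ ηconst d n - ((d:ℝ) + (n:ℝ)) - (k':ℝ) * ((d:ℝ) + (n:ℝ) - 2) := by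
    have h := le_max_right ((((d:ℝ) + (n:ℝ)) - 1) ^ 2 / 4) (((d:ℝ) + (n:ℝ)) + 6)
    rw [ηconst]
    linarith
  have hf1 : (L:ℝ) ^ ((((d:ℝ) + (n:ℝ) - 3) ^ 2 / 4) + (-(k':ℝ) * ((d:ℝ) + (n:ℝ) - 2)))
      ≤ (L:ℝ) ^ (ηconst d n - ((d:ℝ) + (n:ℝ)) - (k':ℝ) * ((d:ℝ) + (n:ℝ) - 2)) :=
    Real.rpow_le_rpow_of_exponent_le hx1.le hE1
  have hf2 : (L:ℝ) ^ ((8:ℝ) + (-(k':ℝ) * ((d:ℝ) + (n:ℝ) - 2)))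
      ≤ (L:ℝ) ^ (ηconst d n - ((d:ℝ) + (n:ℝ)) - (k':ℝ) * ((d:ℝ) + (n:ℝ) - 2)) :=
    Real.rpow_le_rpow_of_exponent_le hx1.le hE2
  have hC₂0 : (0:ℝ) ≤ C₂ := by linarith
  nlinarith [hlow, hhigh, hf1, hf2,
    Real.rpow_pos_of_pos hx0 (ηconst d n - ((d:ℝ) + (n:ℝ)) - (k':ℝ) * ((d:ℝ) + (n:ℝ) - 2))]

open Real Finset in
theorem statement18'
    (d n : ℕ) (hd : 1 ≤ d) (c : ℝ) (hc : 1 ≤ c) :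
    ∃ c' : ℝ, 0 < c' ∧
      ∀ L Nn : ℕ, Odd L → 3 ≤ L → 1 ≤ Nn → ∀ [NeZero (L ^ Nn)],
        ∀ k ∈ Finset.Icc 1 (Nn + 1),
        (((L : ℝ) ^ (d * Nn))⁻¹ *
            ∑ p ∈ Finset.univ.filter (fun p : Fin d → ZMod (L ^ Nn) => p ≠ 0),
              Mstep c L (k - 1) (annIdx L (pNorm (L ^ Nn) p)) *
                MstepT c L (k - 1) (annIdx L (pNorm (L ^ Nn) p)) *
                pNorm (L ^ Nn) p ^ ((n : ℤ) - 2) ≤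
          c' * (L : ℝ) ^ (ηconst d n - ((k : ℝ) - 1) * ((d : ℝ) + (n : ℝ) - 2))) ∧
        (((L : ℝ) ^ (d * Nn))⁻¹ *
            ∑ p ∈ Finset.univ.filter (fun p : Fin d → ZMod (L ^ Nn) => p ≠ 0),
              MstepT c L (k - 1) (annIdx L (pNorm (L ^ Nn) p)) ^ 2 *
                pNorm (L ^ Nn) p ^ ((n : ℤ) - 2) ≤
          c * c' * (L : ℝ) ^ (ηconst d n + 8 - ((k : ℝ) - 1) * ((d : ℝ) + (n : ℝ) - 2))) ∧
        (((L : ℝ) ^ (d * Nn))⁻¹ *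
            ∑ p ∈ Finset.univ.filter (fun p : Fin d → ZMod (L ^ Nn) => p ≠ 0),
              Mstep c L Nn (annIdx L (pNorm (L ^ Nn) p)) ^ 2 *
                pNorm (L ^ Nn) p ^ ((n : ℤ) - 2) ≤
          c' * (L : ℝ) ^ (ηconst d n - (Nn : ℝ) * ((d : ℝ) + (n : ℝ) - 2))) := by
  obtain ⟨C, hC1, hC⟩ := scalar_a d n hd c hc
  have hsd : (0:ℝ) < Real.sqrt d := Real.sqrt_pos.mpr (by exact_mod_cast hd)
  set B : ℝ := (Real.pi * Real.sqrt d) ^ n / Real.pi ^ 2 with hB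
  have hBpos : 0 < B := by
    have := Real.pi_pos
    positivity
  refine ⟨3 ^ d * B * C, by positivity, ?_⟩
  intro L Nn hodd hL hNn _inst k hk
  rw [Finset.mem_Icc] at hk
  have hx : (3:ℝ) ≤ (L:ℝ) := by exact_mod_cast hL
  have hx1 : (1:ℝ) < (L:ℝ) := by linarith
  have hx0 : (0:ℝ) < (L:ℝ) := by linarith
  have hk' : k - 1 ≤ Nn := by omega
  have hkR : ((k - 1 : ℕ):ℝ) = (k:ℝ) - 1 := by
    have h1 : (1:ℕ) ≤ k := hk.1
    push_cast [h1]
    ring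
  have hzp : (L:ℝ) ^ ((d:ℤ) + (n:ℤ)) = (L:ℝ) ^ ((d:ℝ) + (n:ℝ)) := by
    rw [← Real.rpow_intCast (L:ℝ) ((d:ℤ) + (n:ℤ))]
    push_cast
    ring_nf
  have hpre : (0:ℝ) < 3 ^ d * B * (L:ℝ) ^ ((d:ℤ) + (n:ℤ)) := by positivity
  refine ⟨?_, ?_, ?_⟩
  -- (a)
  · refine le_trans (master (d := d) (N := Nn) n hd hodd hL
      (fun j => Mstep c L (k - 1) j * MstepT c L (k - 1) j)
      (fun j => mul_nonneg (Mstep_nonneg hc L _ j) (MstepT_nonneg hc L _ j))) ?_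
    have h2 := hC L hL Nn (k - 1) hk'
    calc 3 ^ d * B * (L:ℝ) ^ ((d:ℤ) + (n:ℤ)) *
          ∑ j ∈ Finset.range (Nn + 1), Mstep c L (k - 1) j * MstepT c L (k - 1) j *
            (L:ℝ) ^ (-(j:ℤ) * ((d:ℤ) + (n:ℤ) - 2))
        ≤ 3 ^ d * B * (L:ℝ) ^ ((d:ℤ) + (n:ℤ)) *
          (C * (L:ℝ) ^ (ηconst d n - ((d:ℝ) + (n:ℝ)) - ((k - 1 : ℕ):ℝ) * ((d:ℝ) + (n:ℝ) - 2))) :=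
          mul_le_mul_of_nonneg_left h2 hpre.le
      _ = 3 ^ d * B * C * (L:ℝ) ^ (ηconst d n - ((k:ℝ) - 1) * ((d:ℝ) + (n:ℝ) - 2)) := by
          rw [hzp, hkR]
          rw [show 3 ^ d * B * (L:ℝ) ^ ((d:ℝ) + (n:ℝ)) *
              (C * (L:ℝ) ^ (ηconst d n - ((d:ℝ) + (n:ℝ)) - ((k:ℝ) - 1) * ((d:ℝ) + (n:ℝ) - 2)))
              = 3 ^ d * B * C * ((L:ℝ) ^ ((d:ℝ) + (n:ℝ)) *
                (L:ℝ) ^ (ηconst d n - ((d:ℝ) + (n:ℝ)) - ((k:ℝ) - 1) * ((d:ℝ) + (n:ℝ) - 2)))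
              from by ring]
          rw [← Real.rpow_add hx0]
          ring_nf
  -- (b)
  · refine le_trans (master (d := d) (N := Nn) n hd hodd hL
      (fun j => MstepT c L (k - 1) j ^ 2)
      (fun j => sq_nonneg _)) ?_
    have hsum : ∑ j ∈ Finset.range (Nn + 1), MstepT c L (k - 1) j ^ 2 *
          (L:ℝ) ^ (-(j:ℤ) * ((d:ℤ) + (n:ℤ) - 2))
        ≤ c * (L:ℝ) ^ (8:ℕ) *
          ∑ j ∈ Finset.range (Nn + 1), Mstep c L (k - 1) j * MstepT c L (k - 1) j *
            (L:ℝ) ^ (-(j:ℤ) * ((d:ℤ) + (n:ℤ) - 2)) := by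
      rw [Finset.mul_sum]
      apply Finset.sum_le_sum
      intro j hj
      have hzj : (0:ℝ) ≤ (L:ℝ) ^ (-(j:ℤ) * ((d:ℤ) + (n:ℤ) - 2)) := le_of_lt (by positivity)
      have hMM : MstepT c L (k-1) j ^ 2
          ≤ c * (L:ℝ) ^ (8:ℕ) * (Mstep c L (k-1) j * MstepT c L (k-1) j) := by
        rw [sq]
        calc MstepT c L (k-1) j * MstepT c L (k-1) j
            ≤ (c * (L:ℝ) ^ (8:ℕ) * Mstep c L (k-1) j) * MstepT c L (k-1) j :=
              mul_le_mul_of_nonneg_right (MstepT_le hc hL _ j) (MstepT_nonneg hc L _ j)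
          _ = c * (L:ℝ) ^ (8:ℕ) * (Mstep c L (k-1) j * MstepT c L (k-1) j) := by ring
      calc MstepT c L (k-1) j ^ 2 * (L:ℝ) ^ (-(j:ℤ) * ((d:ℤ) + (n:ℤ) - 2))
          ≤ (c * (L:ℝ) ^ (8:ℕ) * (Mstep c L (k-1) j * MstepT c L (k-1) j)) *
              (L:ℝ) ^ (-(j:ℤ) * ((d:ℤ) + (n:ℤ) - 2)) := mul_le_mul_of_nonneg_right hMM hzj
        _ = c * (L:ℝ) ^ (8:ℕ) * (Mstep c L (k-1) j * MstepT c L (k-1) j *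
              (L:ℝ) ^ (-(j:ℤ) * ((d:ℤ) + (n:ℤ) - 2))) := by ring
    have h2 := hC L hL Nn (k - 1) hk'
    have hc8 : (0:ℝ) ≤ c * (L:ℝ) ^ (8:ℕ) := by positivity
    calc 3 ^ d * B * (L:ℝ) ^ ((d:ℤ) + (n:ℤ)) *
          ∑ j ∈ Finset.range (Nn + 1), MstepT c L (k - 1) j ^ 2 *
            (L:ℝ) ^ (-(j:ℤ) * ((d:ℤ) + (n:ℤ) - 2))
        ≤ 3 ^ d * B * (L:ℝ) ^ ((d:ℤ) + (n:ℤ)) * (c * (L:ℝ) ^ (8:ℕ) *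
          (C * (L:ℝ) ^ (ηconst d n - ((d:ℝ) + (n:ℝ)) - ((k - 1 : ℕ):ℝ) * ((d:ℝ) + (n:ℝ) - 2)))) := by
          apply mul_le_mul_of_nonneg_left _ hpre.le
          exact le_trans hsum (mul_le_mul_of_nonneg_left h2 hc8)
      _ = c * (3 ^ d * B * C) *
            (L:ℝ) ^ (ηconst d n + 8 - ((k:ℝ) - 1) * ((d:ℝ) + (n:ℝ) - 2)) := by
          rw [hzp, hkR]
          have h8 : (L:ℝ) ^ (8:ℕ) = (L:ℝ) ^ ((8:ℕ):ℝ) := (Real.rpow_natCast _ _).symm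
          rw [h8]
          rw [show 3 ^ d * B * (L:ℝ) ^ ((d:ℝ) + (n:ℝ)) * (c * (L:ℝ) ^ ((8:ℕ):ℝ) *
              (C * (L:ℝ) ^ (ηconst d n - ((d:ℝ) + (n:ℝ)) - ((k:ℝ) - 1) * ((d:ℝ) + (n:ℝ) - 2))))
              = c * (3 ^ d * B * C) * ((L:ℝ) ^ ((d:ℝ) + (n:ℝ)) * ((L:ℝ) ^ ((8:ℕ):ℝ) *
                (L:ℝ) ^ (ηconst d n - ((d:ℝ) + (n:ℝ)) - ((k:ℝ) - 1) * ((d:ℝ) + (n:ℝ) - 2))))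
              from by ring]
          rw [← Real.rpow_add hx0, ← Real.rpow_add hx0,
            show ((d:ℝ) + (n:ℝ)) + (((8:ℕ):ℝ) +
                (ηconst d n - ((d:ℝ) + (n:ℝ)) - ((k:ℝ) - 1) * ((d:ℝ) + (n:ℝ) - 2)))
              = ηconst d n + 8 - ((k:ℝ) - 1) * ((d:ℝ) + (n:ℝ) - 2) from by push_cast; ring]
  -- (c)
  · refine le_trans (master (d := d) (N := Nn) n hd hodd hL
      (fun j => Mstep c L Nn j ^ 2)
      (fun j => sq_nonneg _)) ?_
    have hsum : ∑ j ∈ Finset.range (Nn + 1), Mstep c L Nn j ^ 2 *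
          (L:ℝ) ^ (-(j:ℤ) * ((d:ℤ) + (n:ℤ) - 2))
        ≤ ∑ j ∈ Finset.range (Nn + 1), Mstep c L Nn j * MstepT c L Nn j *
            (L:ℝ) ^ (-(j:ℤ) * ((d:ℤ) + (n:ℤ) - 2)) := by
      apply Finset.sum_le_sum
      intro j hj
      rw [Finset.mem_range, Nat.lt_succ_iff] at hj
      have hzj : (0:ℝ) ≤ (L:ℝ) ^ (-(j:ℤ) * ((d:ℤ) + (n:ℤ) - 2)) := le_of_lt (by positivity)
      apply mul_le_mul_of_nonneg_right _ hzj
      rw [sq]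
      exact mul_le_mul_of_nonneg_left (Mstep_le_MstepT hc hL hj) (Mstep_nonneg hc L _ j)
    have h2 := hC L hL Nn Nn (le_refl Nn)
    calc 3 ^ d * B * (L:ℝ) ^ ((d:ℤ) + (n:ℤ)) *
          ∑ j ∈ Finset.range (Nn + 1), Mstep c L Nn j ^ 2 *
            (L:ℝ) ^ (-(j:ℤ) * ((d:ℤ) + (n:ℤ) - 2))
        ≤ 3 ^ d * B * (L:ℝ) ^ ((d:ℤ) + (n:ℤ)) *
          (C * (L:ℝ) ^ (ηconst d n - ((d:ℝ) + (n:ℝ)) - (Nn:ℝ) * ((d:ℝ) + (n:ℝ) - 2))) :=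
          mul_le_mul_of_nonneg_left (le_trans hsum h2) hpre.le
      _ = 3 ^ d * B * C * (L:ℝ) ^ (ηconst d n - (Nn:ℝ) * ((d:ℝ) + (n:ℝ) - 2)) := by
          rw [hzp]
          rw [show 3 ^ d * B * (L:ℝ) ^ ((d:ℝ) + (n:ℝ)) *
              (C * (L:ℝ) ^ (ηconst d n - ((d:ℝ) + (n:ℝ)) - (Nn:ℝ) * ((d:ℝ) + (n:ℝ) - 2)))
              = 3 ^ d * B * C * ((L:ℝ) ^ ((d:ℝ) + (n:ℝ)) *
                (L:ℝ) ^ (ηconst d n - ((d:ℝ) + (n:ℝ)) - (Nn:ℝ) * ((d:ℝ) + (n:ℝ) - 2)))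
              from by ring]
          rw [← Real.rpow_add hx0]
          ring_nf

/-- **Lemma 4.3** (summation estimates over the dual torus): for every `n ≥ 0` and `c ≥ 1`
there is a constant `c'` (depending only on `c`, `n`, `d`) such that, with
`η = max(¼(d+n-1)², d+n+6) + 2`, for all `L ≥ 3`, `N ≥ 1` and `k = 1,…,N+1`:
(a) `L^{-dN} ∑_{p≠0} M_{k-1}(p) M̃_{k-1}(p) |p|^{n-2} ≤ c' L^η L^{-(k-1)(d+n-2)}`;
(b) `L^{-dN} ∑_{p≠0} M̃_{k-1}(p)² |p|^{n-2} ≤ c c' L^{η+8} L^{-(k-1)(d+n-2)}`;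
(c) `L^{-dN} ∑_{p≠0} M_N(p)² |p|^{n-2} ≤ c' L^η L^{-N(d+n-2)}`. -/
theorem statement18
    (d n : ℕ) (hd : 1 ≤ d) (c : ℝ) (hc : 1 ≤ c) :
    ∃ c' : ℝ, 0 < c' ∧
      ∀ L Nn : ℕ, Odd L → 3 ≤ L → 1 ≤ Nn → ∀ [NeZero (L ^ Nn)],
        ∀ k ∈ Finset.Icc 1 (Nn + 1),
        -- (a)
        (((L : ℝ) ^ (d * Nn))⁻¹ *
            ∑ p ∈ Finset.univ.filter (fun p : Fin d → ZMod (L ^ Nn) => p ≠ 0),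
              Mstep c L (k - 1) (annIdx L (pNorm (L ^ Nn) p)) *
                MstepT c L (k - 1) (annIdx L (pNorm (L ^ Nn) p)) *
                pNorm (L ^ Nn) p ^ ((n : ℤ) - 2) ≤
          c' * (L : ℝ) ^ (ηconst d n - ((k : ℝ) - 1) * ((d : ℝ) + (n : ℝ) - 2))) ∧
        -- (b)
        (((L : ℝ) ^ (d * Nn))⁻¹ *
            ∑ p ∈ Finset.univ.filter (fun p : Fin d → ZMod (L ^ Nn) => p ≠ 0),
              MstepT c L (k - 1) (annIdx L (pNorm (L ^ Nn) p)) ^ 2 *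
                pNorm (L ^ Nn) p ^ ((n : ℤ) - 2) ≤
          c * c' * (L : ℝ) ^ (ηconst d n + 8 - ((k : ℝ) - 1) * ((d : ℝ) + (n : ℝ) - 2))) ∧
        -- (c)
        (((L : ℝ) ^ (d * Nn))⁻¹ *
            ∑ p ∈ Finset.univ.filter (fun p : Fin d → ZMod (L ^ Nn) => p ≠ 0),
              Mstep c L Nn (annIdx L (pNorm (L ^ Nn) p)) ^ 2 *
                pNorm (L ^ Nn) p ^ ((n : ℤ) - 2) ≤
          c' * (L : ℝ) ^ (ηconst d n - (Nn : ℝ) * ((d : ℝ) + (n : ℝ) - 2))) :=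
  statement18' d n hd c hc

end FRD
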